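/- For every vertex v ∈ V, wt(v) ≤ 4·μ^{s/(s+1)}. -/

import Mathlib

open Finset

/-- For every vertex `v ∈ V`, `wt(v) ≤ 4·μ^{s/(s+1)}`, where
`wt(v) = ∑_{u ∈ Γ⁺(v)} (d_v^{s-1} + d_u^{s-1})` and `μ = ∑_{v ∈ V} d_v^s`. -/
theorem wt_le {V : Type*} [Fintype V] [DecidableEq V]
    (G : SimpleGraph V) [DecidableRel G.Adj]
    (s : ℕ) (hs : 1 ≤ s)
    (prec : V → V → Prop) [DecidableRel prec] [IsStrictTotalOrder V prec]
    (hmono : ∀ u v : V, G.degree u < G.degree v → prec u v)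
    (μ : ℝ) (hμ : μ = ∑ v : V, (G.degree v : ℝ) ^ s) :
    ∀ v : V, ∑ u ∈ (G.neighborFinset v).filter (fun u => prec v u),
        ((G.degree v : ℝ) ^ (s - 1) + (G.degree u : ℝ) ^ (s - 1)) ≤
      4 * μ ^ ((s : ℝ) / ((s : ℝ) + 1)) := by
  intro v
  have hd0 : ∀ u : V, (0:ℝ) ≤ (G.degree u : ℝ) := fun u => Nat.cast_nonneg _
  set S := (G.neighborFinset v).filter (fun u => prec v u) with hSdef
  have hμ0 : (0:ℝ) ≤ μ := by
    rw [hμ]; exact Finset.sum_nonneg fun u _ => pow_nonneg (hd0 u) s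
  rcases eq_or_ne S ∅ with hSe | hSe
  · rw [hSe]
    simp only [Finset.sum_empty]
    positivity
  · have hSne : S.Nonempty := Finset.nonempty_iff_ne_empty.2 hSe
    -- every u in S is a neighbor of v with prec v u
    have hmemS : ∀ u ∈ S, u ∈ G.neighborFinset v ∧ prec v u := by
      intro u hu
      rw [hSdef, Finset.mem_filter] at hu
      exact hu
    have hkey : ∀ u ∈ S, (G.degree v : ℝ) ≤ (G.degree u : ℝ) := by
      intro u hu
      by_contra h
      push_neg at h
      have hlt : G.degree u < G.degree v := by exact_mod_cast h
      exact absurd ((hmemS u hu).2) (asymm (hmono u v hlt))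
    -- μ ≥ 1
    have hμ1 : (1:ℝ) ≤ μ := by
      obtain ⟨u, hu⟩ := hSne
      have hadj : G.Adj v u := (SimpleGraph.mem_neighborFinset _ _ _).1 (hmemS u hu).1
      have hdeg : 1 ≤ G.degree u := by
        have hv : v ∈ G.neighborFinset u := (SimpleGraph.mem_neighborFinset _ _ _).2 hadj.symm
        exact Finset.card_pos.2 ⟨v, hv⟩
      have h1 : (1:ℝ) ≤ (G.degree u : ℝ) := by exact_mod_cast hdeg
      have h2 : (1:ℝ) ≤ (G.degree u : ℝ) ^ s := one_le_pow₀ h1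
      rw [hμ]
      calc (1:ℝ) ≤ (G.degree u : ℝ) ^ s := h2
        _ ≤ ∑ w : V, (G.degree w : ℝ) ^ s :=
          Finset.single_le_sum (fun w _ => pow_nonneg (hd0 w) s) (Finset.mem_univ u)
    have hμpos : (0:ℝ) < μ := lt_of_lt_of_le one_pos hμ1
    set T : ℝ := μ ^ (1 / ((s:ℝ) + 1)) with hTdef
    have hT1 : (1:ℝ) ≤ T := Real.one_le_rpow hμ1 (by positivity)
    have hTpos : (0:ℝ) < T := lt_of_lt_of_le one_pos hT1
    have hs1 : s - 1 + 1 = s := Nat.succ_pred_eq_of_pos hs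
    -- first reduction: wt(v) ≤ 2 * ∑ d_u^{s-1}
    have step1 : ∑ u ∈ S, ((G.degree v : ℝ) ^ (s - 1) + (G.degree u : ℝ) ^ (s - 1))
        ≤ 2 * ∑ u ∈ S, (G.degree u : ℝ) ^ (s - 1) := by
      rw [Finset.mul_sum]
      apply Finset.sum_le_sum
      intro u hu
      have : (G.degree v : ℝ) ^ (s-1) ≤ (G.degree u : ℝ) ^ (s-1) :=
        pow_le_pow_left₀ (hd0 v) (hkey u hu) _
      linarith
    -- split
    set A := S.filter (fun u => (G.degree u : ℝ) ≤ T) with hAdef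
    set B := S.filter (fun u => ¬ (G.degree u : ℝ) ≤ T) with hBdef
    have hsplit : ∑ u ∈ S, (G.degree u : ℝ) ^ (s - 1)
        = ∑ u ∈ A, (G.degree u : ℝ) ^ (s - 1) + ∑ u ∈ B, (G.degree u : ℝ) ^ (s - 1) :=
      (Finset.sum_filter_add_sum_filter_not S _ _).symm
    -- bound on A
    have hA : ∑ u ∈ A, (G.degree u : ℝ) ^ (s - 1) ≤ T ^ s := by
      rcases A.eq_empty_or_nonempty with hAe | ⟨u0, hu0⟩
      · rw [hAe, Finset.sum_empty]; positivity
      · have hu0' := Finset.mem_filter.1 hu0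
        have hvT : (G.degree v : ℝ) ≤ T := le_trans (hkey u0 hu0'.1) hu0'.2
        have h1 : ∑ u ∈ A, (G.degree u : ℝ) ^ (s - 1) ≤ A.card * T ^ (s-1) := by
          calc ∑ u ∈ A, (G.degree u : ℝ) ^ (s - 1)
              ≤ ∑ _u ∈ A, T ^ (s-1) := by
                apply Finset.sum_le_sum
                intro u hu
                exact pow_le_pow_left₀ (hd0 u) ((Finset.mem_filter.1 hu).2) _
            _ = A.card * T ^ (s-1) := by rw [Finset.sum_const, nsmul_eq_mul]
        have hcard : (A.card : ℝ) ≤ (G.degree v : ℝ) := by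
          have h2 : A.card ≤ S.card := Finset.card_le_card (Finset.filter_subset _ _)
          have h3 : S.card ≤ (G.neighborFinset v).card :=
            Finset.card_le_card (Finset.filter_subset _ _)
          have : A.card ≤ G.degree v := le_trans h2 h3
          exact_mod_cast this
        have : ∑ u ∈ A, (G.degree u : ℝ) ^ (s - 1) ≤ T * T ^ (s-1) := by
          calc ∑ u ∈ A, (G.degree u : ℝ) ^ (s - 1) ≤ (A.card : ℝ) * T ^ (s-1) := h1
            _ ≤ T * T ^ (s-1) := by
                apply mul_le_mul_of_nonneg_right (le_trans hcard hvT) (by positivity)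
        calc ∑ u ∈ A, (G.degree u : ℝ) ^ (s - 1) ≤ T * T ^ (s-1) := this
          _ = T ^ s := by rw [← pow_succ', hs1]
    -- bound on B
    have hB : ∑ u ∈ B, (G.degree u : ℝ) ^ (s - 1) ≤ μ / T := by
      have h1 : ∀ u ∈ B, (G.degree u : ℝ) ^ (s - 1) ≤ (G.degree u : ℝ) ^ s / T := by
        intro u hu
        have hTu : T ≤ (G.degree u : ℝ) := le_of_lt (not_le.1 (Finset.mem_filter.1 hu).2)
        rw [le_div_iff₀ hTpos]
        calc (G.degree u : ℝ) ^ (s-1) * T ≤ (G.degree u : ℝ) ^ (s-1) * (G.degree u : ℝ) := by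
              apply mul_le_mul_of_nonneg_left hTu (by positivity)
          _ = (G.degree u : ℝ) ^ s := by rw [← pow_succ, hs1]
      calc ∑ u ∈ B, (G.degree u : ℝ) ^ (s - 1)
          ≤ ∑ u ∈ B, (G.degree u : ℝ) ^ s / T := Finset.sum_le_sum h1
        _ = (∑ u ∈ B, (G.degree u : ℝ) ^ s) / T := by rw [Finset.sum_div]
        _ ≤ μ / T := by
            gcongr
            rw [hμ]
            exact Finset.sum_le_sum_of_subset_of_nonneg (Finset.subset_univ B)
              (fun w _ _ => pow_nonneg (hd0 w) s)
    -- identify T^s and μ/T with μ^{s/(s+1)}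
    have hden : ((s:ℝ) + 1) ≠ 0 := by positivity
    have hTs : T ^ s = μ ^ ((s:ℝ) / ((s:ℝ) + 1)) := by
      rw [hTdef, ← Real.rpow_natCast (μ ^ (1 / ((s:ℝ) + 1))) s, ← Real.rpow_mul hμ0]
      congr 1
      field_simp
    have hμT : μ / T = μ ^ ((s:ℝ) / ((s:ℝ) + 1)) := by
      rw [hTdef]
      rw [show (s:ℝ) / ((s:ℝ) + 1) = 1 - 1 / ((s:ℝ) + 1) by field_simp; ring]
      rw [Real.rpow_sub hμpos, Real.rpow_one]
    calc ∑ u ∈ S, ((G.degree v : ℝ) ^ (s - 1) + (G.degree u : ℝ) ^ (s - 1))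
        ≤ 2 * ∑ u ∈ S, (G.degree u : ℝ) ^ (s - 1) := step1
      _ = 2 * (∑ u ∈ A, (G.degree u : ℝ) ^ (s - 1) + ∑ u ∈ B, (G.degree u : ℝ) ^ (s - 1)) := by
          rw [hsplit]
      _ ≤ 2 * (T ^ s + μ / T) := by linarith
      _ = 4 * μ ^ ((s:ℝ) / ((s:ℝ) + 1)) := by rw [hTs, hμT]; ring
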